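/- Let v : [0,∞) → [0,∞) be a bounded Borel solution of equation (E) vanishing outside [0,a]. Then for every t ≥ 0 one has v(t) ≤ βc ∫_0^∞ f(t+s) s^{β−1} ds = c ∑_{k=1}^m θ_k ((t_k − t)_+)^β. In particular ∫_0^∞ v(t) dt ≤ (c/(1+β)) ∑_{k=1}^m θ_k t_k^{1+β}, so that for fixed t_1,…,t_m the map (θ_1,…,θ_m) ↦ ∫_0^∞ v(t) dt tends to 0 as (θ_1,…,θ_m) → (0,…,0). -/

import Mathlib

set_option autoImplicit false
set_option maxHeartbeats 1000000

open MeasureTheory Filter Set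


lemma int_rpow_Ioc {β : ℝ} (hβ : 0 < β) (r : ℝ) :
    ∫ s in Ioc (0:ℝ) r, s ^ (β - 1) = max r 0 ^ β / β := by
  rcases le_or_gt r 0 with h | h
  · rw [Ioc_eq_empty (not_lt.2 h), max_eq_right h, Real.zero_rpow hβ.ne',
      Measure.restrict_empty, integral_zero_measure, zero_div]
  · have h1 : β - 1 + 1 = β := by ring
    rw [max_eq_left h.le, ← intervalIntegral.integral_of_le h.le,
      integral_rpow (Or.inl (by linarith)), h1, Real.zero_rpow hβ.ne', sub_zero]

lemma integrableOn_rpow_Ioc {β : ℝ} (hβ : 0 < β) (r : ℝ) :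
    IntegrableOn (fun s : ℝ => s ^ (β - 1)) (Ioc 0 r) := by
  rcases le_or_gt r 0 with h | h
  · rw [Ioc_eq_empty (not_lt.2 h)]; exact integrableOn_empty
  · have := intervalIntegral.intervalIntegrable_rpow' (r := β - 1) (a := 0) (b := r)
      (by linarith)
    rwa [intervalIntegrable_iff_integrableOn_Ioc_of_le h.le] at this

lemma integrable_ind {β : ℝ} (hβ : 0 < β) (r : ℝ) :
    Integrable (indicator (Ioc (0:ℝ) r) (fun s : ℝ => s ^ (β - 1)))
      (volume.restrict (Ioi 0)) :=
  ((integrable_indicator_iff measurableSet_Ioc).2 (integrableOn_rpow_Ioc hβ r)).restrict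

lemma int_max_rpow {β : ℝ} (hβ : 0 < β) {r : ℝ} (hr : 0 < r) :
    ∫ t in Ioi (0:ℝ), max (r - t) 0 ^ β = r ^ (1+β) / (1+β) := by
  have heq : EqOn (fun t : ℝ => max (r - t) 0 ^ β)
      (indicator (Ioc (0:ℝ) r) (fun t => (r - t) ^ β)) (Ioi 0) := by
    intro t ht
    simp only [mem_Ioi] at ht
    by_cases h : t ≤ r
    · rw [indicator_of_mem (Set.mem_Ioc.2 ⟨ht, h⟩)]
      simp only [max_eq_left (by linarith : (0:ℝ) ≤ r - t)]
    · rw [indicator_of_notMem (fun hm => h (Set.mem_Ioc.1 hm).2)]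
      simp only [max_eq_right (by linarith : r - t ≤ (0:ℝ)), Real.zero_rpow hβ.ne']
  rw [setIntegral_congr_fun measurableSet_Ioi heq,
    setIntegral_indicator measurableSet_Ioc,
    inter_eq_self_of_subset_right Ioc_subset_Ioi_self,
    ← intervalIntegral.integral_of_le hr.le,
    intervalIntegral.integral_comp_sub_left (fun u => u ^ β) r]
  rw [sub_self, sub_zero, integral_rpow (Or.inl (by linarith)),
    Real.zero_rpow (by linarith), sub_zero, add_comm β 1]

lemma sum_ind_eqOn {β : ℝ} (m : ℕ) (θ tk : ℕ → ℝ) {t : ℝ} (ht : 0 ≤ t) :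
    EqOn (fun s : ℝ => (∑ k ∈ Finset.range m,
        indicator (Icc (0:ℝ) (tk k)) (fun _ => θ k) (t+s)) * s ^ (β-1))
      (fun s : ℝ => ∑ k ∈ Finset.range m,
        θ k * indicator (Ioc (0:ℝ) (tk k - t)) (fun u => u ^ (β-1)) s)
      (Ioi 0) := by
  intro s hs
  simp only [mem_Ioi] at hs
  simp only [Finset.sum_mul]
  refine Finset.sum_congr rfl fun k _ => ?_
  by_cases h : t + s ≤ tk k
  · rw [indicator_of_mem (Set.mem_Icc.2 ⟨by linarith, h⟩),
      indicator_of_mem (Set.mem_Ioc.2 ⟨hs, by linarith⟩)]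
  · rw [indicator_of_notMem (fun hm => h (Set.mem_Icc.1 hm).2),
      indicator_of_notMem (fun hm => h (by have := (Set.mem_Ioc.1 hm).2; linarith)),
      zero_mul, mul_zero]

lemma sum_ind_integrable {β : ℝ} (hβ0 : 0 < β) (m : ℕ) (θ tk : ℕ → ℝ) (t : ℝ) :
    Integrable (fun s : ℝ => ∑ k ∈ Finset.range m,
      θ k * indicator (Ioc (0:ℝ) (tk k - t)) (fun u => u ^ (β-1)) s)
      (volume.restrict (Ioi 0)) :=
  integrable_finset_sum _ fun k _ => (integrable_ind hβ0 _).const_mul _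

lemma G1_eq {β c : ℝ} (hβ0 : 0 < β) (m : ℕ) (θ tk : ℕ → ℝ)
    {t : ℝ} (ht : 0 ≤ t) :
    β * c * ∫ s in Ioi (0:ℝ),
        (∑ k ∈ Finset.range m, indicator (Icc (0:ℝ) (tk k)) (fun _ => θ k) (t+s)) * s ^ (β-1)
      = c * ∑ k ∈ Finset.range m, θ k * max (tk k - t) 0 ^ β := by
  rw [setIntegral_congr_fun measurableSet_Ioi (sum_ind_eqOn m θ tk ht),
    integral_finset_sum _ (fun k _ => (integrable_ind hβ0 _).const_mul _)]
  have hterm : ∀ k ∈ Finset.range m,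
      (∫ s in Ioi (0:ℝ), θ k * indicator (Ioc (0:ℝ) (tk k - t)) (fun u => u ^ (β-1)) s)
        = θ k * (max (tk k - t) 0 ^ β / β) := by
    intro k _
    rw [integral_const_mul, setIntegral_indicator measurableSet_Ioc,
      inter_eq_self_of_subset_right Ioc_subset_Ioi_self, int_rpow_Ioc hβ0]
  rw [Finset.sum_congr rfl hterm, Finset.mul_sum, Finset.mul_sum]
  refine Finset.sum_congr rfl fun k _ => ?_
  field_simp

lemma main13 (β K c : ℝ) (hβ : β ∈ Ioo (0:ℝ) 1) (hK : 0 < K) (hc : 0 < c)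
    (m : ℕ) (θ tk : ℕ → ℝ) (hθ : ∀ k < m, 0 ≤ θ k) (htk : ∀ k < m, 0 < tk k)
    (v : ℝ → ℝ) (hv_meas : Measurable v) (hv_nonneg : ∀ t, 0 ≤ v t)
    (M : ℝ) (hv_bdd : ∀ t, v t ≤ M) (b : ℝ) (hv_supp : ∀ t, b < t → v t = 0)
    (hv_eq : ∀ t ≥ (0:ℝ), v t = β * c * ∫ s in Ioi (0:ℝ),
      ((∑ k ∈ Finset.range m, indicator (Icc (0:ℝ) (tk k)) (fun _ => θ k) (t+s))
        - K * v (t+s) ^ (1+β)) * s ^ (β-1)) :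
    (∀ t ≥ (0:ℝ), v t ≤ c * ∑ k ∈ Finset.range m, θ k * max (tk k - t) 0 ^ β) ∧
    ∫ t in Ioi (0:ℝ), v t ≤ c / (1+β) * ∑ k ∈ Finset.range m, θ k * tk k ^ (1+β) := by
  obtain ⟨hβ0, hβ1⟩ := hβ
  have h1β : (0:ℝ) < 1 + β := by linarith
  have hM0 : (0:ℝ) ≤ max M 0 := le_max_right _ _
  -- integrability of the f-part
  have hg_int : ∀ t : ℝ, 0 ≤ t → IntegrableOn (fun s : ℝ =>
      (∑ k ∈ Finset.range m, indicator (Icc (0:ℝ) (tk k)) (fun _ => θ k) (t+s)) * s ^ (β-1))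
      (Ioi 0) := fun t ht =>
    IntegrableOn.congr_fun (sum_ind_integrable hβ0 m θ tk t)
      (sum_ind_eqOn m θ tk ht).symm measurableSet_Ioi
  -- integrability of the v-part
  have hh_int : ∀ t : ℝ, 0 ≤ t →
      IntegrableOn (fun s : ℝ => K * v (t+s) ^ (1+β) * s ^ (β-1)) (Ioi 0) := by
    intro t ht
    apply Integrable.mono' ((integrable_ind hβ0 (b - t)).const_mul (K * max M 0 ^ (1+β)))
    · have mh : Measurable (fun s : ℝ => K * v (t+s) ^ (1+β) * s ^ (β-1)) := by
        have m1 : Measurable fun s : ℝ => v (t + s) :=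
          hv_meas.comp (measurable_const.add measurable_id)
        measurability
      exact mh.aestronglyMeasurable
    · filter_upwards [ae_restrict_mem measurableSet_Ioi] with s hs
      simp only [mem_Ioi] at hs
      have hsp : (0:ℝ) ≤ s ^ (β-1) := Real.rpow_nonneg hs.le _
      rw [Real.norm_eq_abs, abs_of_nonneg
        (mul_nonneg (mul_nonneg hK.le (Real.rpow_nonneg (hv_nonneg _) _)) hsp)]
      by_cases hb : b < t + s
      · rw [hv_supp _ hb, Real.zero_rpow h1β.ne', mul_zero, zero_mul]
        exact mul_nonneg (mul_nonneg hK.le (Real.rpow_nonneg hM0 _))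
          (indicator_nonneg (fun u hu => Real.rpow_nonneg (le_of_lt hu.1) _) s)
      · push_neg at hb
        rw [indicator_of_mem (Set.mem_Ioc.2 ⟨hs, by linarith⟩)]
        have h2 : v (t+s) ^ (1+β) ≤ max M 0 ^ (1+β) :=
          Real.rpow_le_rpow (hv_nonneg _) (le_trans (hv_bdd _) (le_max_left _ _)) h1β.le
        have h3 := mul_le_mul_of_nonneg_right
          (mul_le_mul_of_nonneg_left h2 hK.le) hsp
        exact h3
    -- done
  -- pointwise bound
  have point : ∀ t : ℝ, 0 ≤ t →
      v t ≤ c * ∑ k ∈ Finset.range m, θ k * max (tk k - t) 0 ^ β := by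
    intro t ht
    have hsplit : (fun s : ℝ =>
        ((∑ k ∈ Finset.range m, indicator (Icc (0:ℝ) (tk k)) (fun _ => θ k) (t+s))
          - K * v (t+s) ^ (1+β)) * s ^ (β-1))
        = fun s : ℝ =>
          (∑ k ∈ Finset.range m, indicator (Icc (0:ℝ) (tk k)) (fun _ => θ k) (t+s)) * s ^ (β-1)
          - K * v (t+s) ^ (1+β) * s ^ (β-1) := by
      funext s; ring
    have hnn : 0 ≤ ∫ s in Ioi (0:ℝ), K * v (t+s) ^ (1+β) * s ^ (β-1) :=
      setIntegral_nonneg measurableSet_Ioi fun s hs =>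
        mul_nonneg (mul_nonneg hK.le (Real.rpow_nonneg (hv_nonneg _) _))
          (Real.rpow_nonneg (le_of_lt hs) _)
    rw [hv_eq t ht, hsplit, integral_sub (hg_int t ht) (hh_int t ht)]
    calc β * c * ((∫ s in Ioi (0:ℝ),
          (∑ k ∈ Finset.range m, indicator (Icc (0:ℝ) (tk k)) (fun _ => θ k) (t+s)) * s ^ (β-1))
          - ∫ s in Ioi (0:ℝ), K * v (t+s) ^ (1+β) * s ^ (β-1))
        ≤ β * c * ∫ s in Ioi (0:ℝ),
          (∑ k ∈ Finset.range m, indicator (Icc (0:ℝ) (tk k)) (fun _ => θ k) (t+s)) * s ^ (β-1) :=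
          mul_le_mul_of_nonneg_left (by linarith) (by positivity)
      _ = c * ∑ k ∈ Finset.range m, θ k * max (tk k - t) 0 ^ β := G1_eq hβ0 m θ tk ht
  refine ⟨fun t ht => point t ht, ?_⟩
  -- integrability of v on Ioi 0
  have hvI : IntegrableOn v (Ioi 0) := by
    apply Integrable.mono' (((integrable_indicator_iff measurableSet_Ioc).2
      (integrableOn_const measure_Ioc_lt_top.ne enorm_ne_top)).restrict
        (s := Ioi 0) (f := indicator (Ioc (0:ℝ) (max b 0)) (fun _ => max M 0)))
    · exact hv_meas.aestronglyMeasurable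
    · filter_upwards [ae_restrict_mem measurableSet_Ioi] with t ht
      simp only [mem_Ioi] at ht
      rw [Real.norm_eq_abs, abs_of_nonneg (hv_nonneg _)]
      by_cases h : t ≤ max b 0
      · rw [indicator_of_mem (Set.mem_Ioc.2 ⟨ht, h⟩)]
        exact le_trans (hv_bdd _) (le_max_left _ _)
      · push_neg at h
        rw [indicator_of_notMem (fun hm => absurd (Set.mem_Ioc.1 hm).2 (not_le.2 h)),
          hv_supp _ (lt_of_le_of_lt (le_max_left b 0) h)]
  -- integrability of each term of G
  have hterm_int : ∀ k ∈ Finset.range m,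
      IntegrableOn (fun t : ℝ => θ k * max (tk k - t) 0 ^ β) (Ioi 0) := by
    intro k hk
    have htk' := htk k (Finset.mem_range.1 hk)
    have hθ' := hθ k (Finset.mem_range.1 hk)
    apply Integrable.mono' (((integrable_indicator_iff measurableSet_Ioc).2
      (integrableOn_const measure_Ioc_lt_top.ne enorm_ne_top)).restrict
        (s := Ioi 0) (f := indicator (Ioc (0:ℝ) (tk k)) (fun _ => θ k * tk k ^ β)))
    · exact (continuous_const.mul (((continuous_const.sub continuous_id).max
        continuous_const).rpow_const (fun x => Or.inr hβ0.le))).aestronglyMeasurable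
    · filter_upwards [ae_restrict_mem measurableSet_Ioi] with t ht
      simp only [mem_Ioi] at ht
      have hmax0 : (0:ℝ) ≤ max (tk k - t) 0 := le_max_right _ _
      rw [Real.norm_eq_abs, abs_of_nonneg (mul_nonneg hθ' (Real.rpow_nonneg hmax0 _))]
      by_cases h : t ≤ tk k
      · rw [indicator_of_mem (Set.mem_Ioc.2 ⟨ht, h⟩)]
        exact mul_le_mul_of_nonneg_left
          (Real.rpow_le_rpow hmax0 (max_le (by linarith) htk'.le) hβ0.le) hθ'
      · push_neg at h
        rw [indicator_of_notMem (fun hm => absurd (Set.mem_Ioc.1 hm).2 (not_le.2 h)),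
          max_eq_right (by linarith), Real.zero_rpow hβ0.ne', mul_zero]
  have hGI : IntegrableOn
      (fun t : ℝ => c * ∑ k ∈ Finset.range m, θ k * max (tk k - t) 0 ^ β) (Ioi 0) :=
    (integrable_finset_sum _ hterm_int).const_mul c
  have step : ∫ t in Ioi (0:ℝ), v t
      ≤ ∫ t in Ioi (0:ℝ), c * ∑ k ∈ Finset.range m, θ k * max (tk k - t) 0 ^ β :=
    setIntegral_mono_on hvI hGI measurableSet_Ioi (fun t ht => point t (le_of_lt ht))
  refine le_trans step (le_of_eq ?_)
  rw [integral_const_mul, integral_finset_sum _ hterm_int]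
  have hterm : ∀ k ∈ Finset.range m,
      (∫ t in Ioi (0:ℝ), θ k * max (tk k - t) 0 ^ β)
        = θ k * (tk k ^ (1+β) / (1+β)) := by
    intro k hk
    rw [integral_const_mul, int_max_rpow hβ0 (htk k (Finset.mem_range.1 hk))]
  rw [Finset.sum_congr rfl hterm, Finset.mul_sum, Finset.mul_sum]
  refine Finset.sum_congr rfl fun k _ => ?_
  ring

/-- any bounded Borel solution `v` of equation (E) vanishing
outside `[0,a]` satisfies
`v(t) ≤ βc ∫_0^∞ f(t+s) s^{β-1} ds = c ∑_k θ_k ((t_k - t)_+)^β` for `t ≥ 0`,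
hence `∫_0^∞ v ≤ (c/(1+β)) ∑_k θ_k t_k^{1+β}`; so for fixed `t_1,…,t_m` the
map `(θ_1,…,θ_m) ↦ ∫_0^∞ v` tends to `0` as `(θ_1,…,θ_m) → 0`. -/
theorem stmt13
    (β K c : ℝ) (hβ : β ∈ Ioo (0 : ℝ) 1) (hK : 0 < K) (hc : 0 < c)
    (m : ℕ) (hm : 0 < m) (θ tk : ℕ → ℝ)
    (hθ : ∀ k < m, 0 ≤ θ k) (htk : ∀ k < m, 0 < tk k)
    (a : ℝ) (ha_mem : ∃ k < m, tk k = a) (ha_max : ∀ k < m, tk k ≤ a)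
    (f : ℝ → ℝ)
    (hf : ∀ t, f t = ∑ k ∈ Finset.range m,
      Set.indicator (Icc (0 : ℝ) (tk k)) (fun _ => θ k) t)
    (v : ℝ → ℝ)
    (hv_meas : Measurable v) (hv_nonneg : ∀ t, 0 ≤ v t)
    (hv_bdd : ∃ M, ∀ t, v t ≤ M)
    (hv_supp : ∀ t, t ∉ Icc (0 : ℝ) a → v t = 0)
    (hv_eq : ∀ t ≥ (0 : ℝ), v t = β * c * ∫ s in Set.Ioi (0 : ℝ),
      (f (t + s) - K * v (t + s) ^ (1 + β)) * s ^ (β - 1)) :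
    (∀ t ≥ (0 : ℝ),
      v t ≤ β * c * ∫ s in Set.Ioi (0 : ℝ), f (t + s) * s ^ (β - 1) ∧
      β * c * ∫ s in Set.Ioi (0 : ℝ), f (t + s) * s ^ (β - 1) =
        c * ∑ k ∈ Finset.range m, θ k * max (tk k - t) 0 ^ β) ∧
    (∫ t in Set.Ioi (0 : ℝ), v t ≤
      c / (1 + β) * ∑ k ∈ Finset.range m, θ k * tk k ^ (1 + β)) ∧
    (∀ ε > (0 : ℝ), ∃ δ > (0 : ℝ), ∀ (θ' : ℕ → ℝ) (v' : ℝ → ℝ),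
      (∀ k < m, 0 ≤ θ' k ∧ θ' k ≤ δ) →
      Measurable v' → (∀ t, 0 ≤ v' t) → (∃ M, ∀ t, v' t ≤ M) →
      (∃ b : ℝ, ∀ t, b < t → v' t = 0) →
      (∀ t ≥ (0 : ℝ), v' t = β * c * ∫ s in Set.Ioi (0 : ℝ),
        ((∑ k ∈ Finset.range m,
          Set.indicator (Icc (0 : ℝ) (tk k)) (fun _ => θ' k) (t + s)) -
          K * v' (t + s) ^ (1 + β)) * s ^ (β - 1)) →
      ∫ t in Set.Ioi (0 : ℝ), v' t ≤ ε) := by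
  obtain ⟨M, hM⟩ := hv_bdd
  have hsupp' : ∀ t, a < t → v t = 0 := fun t h =>
    hv_supp t (fun hmem => absurd hmem.2 (not_le.2 h))
  have hv_eq' : ∀ t ≥ (0:ℝ), v t = β * c * ∫ s in Ioi (0:ℝ),
      ((∑ k ∈ Finset.range m, indicator (Icc (0:ℝ) (tk k)) (fun _ => θ k) (t+s))
        - K * v (t+s) ^ (1+β)) * s ^ (β-1) := by
    intro t ht
    rw [hv_eq t ht]
    simp only [hf]
  obtain ⟨point, intineq⟩ := main13 β K c hβ hK hc m θ tk hθ htk v hv_meas hv_nonneg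
    M hM a hsupp' hv_eq'
  have h1β : (0:ℝ) < 1 + β := by linarith [hβ.1]
  refine ⟨?_, intineq, ?_⟩
  · intro t ht
    have heqG : β * c * (∫ s in Ioi (0:ℝ), f (t+s) * s ^ (β-1))
        = c * ∑ k ∈ Finset.range m, θ k * max (tk k - t) 0 ^ β := by
      simp only [hf]
      exact G1_eq hβ.1 m θ tk ht
    refine ⟨?_, heqG⟩
    rw [heqG]
    exact point t ht
  · intro ε hε
    set S := ∑ k ∈ Finset.range m, tk k ^ (1+β) with hS_def
    have hS : 0 < S := Finset.sum_pos
      (fun k hk => Real.rpow_pos_of_pos (htk k (Finset.mem_range.1 hk)) _)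
      (Finset.nonempty_range_iff.2 hm.ne')
    refine ⟨ε * (1+β) / (c * S), by positivity, ?_⟩
    intro θ' v' hθ' hv'_meas hv'_nonneg hv'_bdd hv'_supp hv'_eq
    obtain ⟨M', hM'⟩ := hv'_bdd
    obtain ⟨b, hb⟩ := hv'_supp
    have key := (main13 β K c hβ hK hc m θ' tk (fun k hk => (hθ' k hk).1) htk v'
      hv'_meas hv'_nonneg M' hM' b hb hv'_eq).2
    refine le_trans key ?_
    have hsum : ∑ k ∈ Finset.range m, θ' k * tk k ^ (1+β) ≤ (ε * (1+β) / (c * S)) * S := by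
      rw [hS_def, Finset.mul_sum]
      refine Finset.sum_le_sum fun k hk => ?_
      exact mul_le_mul_of_nonneg_right (hθ' k (Finset.mem_range.1 hk)).2
        (Real.rpow_nonneg (htk k (Finset.mem_range.1 hk)).le _)
    calc c / (1+β) * ∑ k ∈ Finset.range m, θ' k * tk k ^ (1+β)
        ≤ c / (1+β) * ((ε * (1+β) / (c * S)) * S) :=
          mul_le_mul_of_nonneg_left hsum (by positivity)
      _ = ε := by field_simp
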